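/- There is a nonzero finite element of Henle's ring that is sent to 0 in B/o but to a nonzero infinitesimal in the hyperreal field: for the sequence x n = 1/(n+1)², (a) the germ of x in Filter.Germ (Filter.cofinite : Filter ℕ) ℝ is nonzero (and finite), (b) x belongs to o, so the class of x in B/o is 0, and (c) Hyperreal.ofSeq x is nonzero, positive, and infinitesimal in ℝ*. -/

import Mathlib

open Filter

def littleO : Set (ℕ → ℝ) :=
  {f : ℕ → ℝ | Filter.Tendsto (fun n : ℕ => (n : ℝ) * f n) Filter.atTop (nhds 0)}

/-- The subring of bounded real sequences. -/
def BddSeq : Subring (ℕ → ℝ) where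
  carrier := {f : ℕ → ℝ | ∃ C : ℝ, ∀ n, |f n| ≤ C}
  zero_mem' := ⟨0, fun n => by simp⟩
  one_mem' := ⟨1, fun n => by simp⟩
  add_mem' := by
    rintro x y ⟨C, hC⟩ ⟨D, hD⟩
    exact ⟨C + D, fun n => (abs_add_le _ _).trans (add_le_add (hC n) (hD n))⟩
  neg_mem' := by
    rintro x ⟨C, hC⟩
    exact ⟨C, fun n => by simpa using hC n⟩
  mul_mem' := by
    rintro x y ⟨C, hC⟩ ⟨D, hD⟩
    refine ⟨C * D, fun n => ?_⟩
    rw [Pi.mul_apply, abs_mul]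
    exact mul_le_mul (hC n) (hD n) (abs_nonneg _) ((abs_nonneg _).trans (hC n))

/-- `littleO` as an ideal of the ring of bounded sequences. -/
def littleOIdeal : Ideal BddSeq where
  carrier := {f : BddSeq | (f : ℕ → ℝ) ∈ littleO}
  zero_mem' := by simp [littleO]
  add_mem' := by
    rintro x y hx hy
    have := hx.add hy
    simp only [littleO, Set.mem_setOf_eq] at *
    simpa [mul_add] using this
  smul_mem' := by
    rintro c x hx
    obtain ⟨C, hC⟩ := c.2
    have h1 : Filter.Tendsto (fun n : ℕ => C * |(n : ℝ) * (x : ℕ → ℝ) n|)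
        Filter.atTop (nhds 0) := by
      have := hx.abs.const_mul C
      simpa using this
    refine squeeze_zero_norm (fun n => ?_) h1
    have hcx : ((c • x : BddSeq) : ℕ → ℝ) n = (c : ℕ → ℝ) n * (x : ℕ → ℝ) n := rfl
    rw [hcx]
    have : ‖(n : ℝ) * ((c : ℕ → ℝ) n * (x : ℕ → ℝ) n)‖
        = |(c : ℕ → ℝ) n| * |(n : ℝ) * (x : ℕ → ℝ) n| := by
      rw [Real.norm_eq_abs, ← abs_mul]; ring_nf
    rw [this]
    exact mul_le_mul_of_nonneg_right (hC n) (abs_nonneg _)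

/-- Giordano's ambient ring ℝ̃ = B/o. -/
abbrev GiordanoAmbient : Type := BddSeq ⧸ littleOIdeal

/-- Little-oh polynomials. -/
def LittleOhPoly (x : ℕ → ℝ) : Prop :=
  ∃ (k : ℕ) (r : ℝ) (α a : Fin k → ℝ), (∀ i, 0 ≤ a i) ∧
    (fun n : ℕ => x n - r - ∑ i, α i * (n : ℝ) ^ (-(a i))) ∈ littleO

/-- Henle's ring: germs of real sequences at the cofinite (Fréchet) filter on ℕ. -/
abbrev HenleRing : Type := Filter.Germ (Filter.cofinite : Filter ℕ) ℝ

lemma invSqSucc_bdd : (fun n : ℕ => 1 / ((n : ℝ) + 1) ^ 2) ∈ BddSeq := by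
  refine ⟨1, fun n => ?_⟩
  have h : (0:ℝ) < ((n : ℝ) + 1) ^ 2 := by positivity
  rw [abs_of_pos (by positivity), div_le_one h]
  nlinarith [Nat.cast_nonneg (α := ℝ) n]

theorem henle_infinitesimal_vanishing_in_giordano_but_not_in_hyperreals :
    ((↑(fun n : ℕ => 1 / ((n : ℝ) + 1) ^ 2) : HenleRing) ≠ 0 ∧
      ∃ m : ℕ, -(((m : ℝ)) : HenleRing) ≤ (↑(fun n : ℕ => 1 / ((n : ℝ) + 1) ^ 2) : HenleRing) ∧
        (↑(fun n : ℕ => 1 / ((n : ℝ) + 1) ^ 2) : HenleRing) ≤ (((m : ℝ)) : HenleRing)) ∧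
    ((fun n : ℕ => 1 / ((n : ℝ) + 1) ^ 2) ∈ littleO ∧
      Ideal.Quotient.mk littleOIdeal
        (⟨fun n : ℕ => 1 / ((n : ℝ) + 1) ^ 2, invSqSucc_bdd⟩ : BddSeq) = 0) ∧
    (Hyperreal.ofSeq (fun n : ℕ => 1 / ((n : ℝ) + 1) ^ 2) ≠ 0 ∧
      0 < Hyperreal.ofSeq (fun n : ℕ => 1 / ((n : ℝ) + 1) ^ 2) ∧
      Hyperreal.Infinitesimal (Hyperreal.ofSeq (fun n : ℕ => 1 / ((n : ℝ) + 1) ^ 2))) := by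
  have hpos : ∀ n : ℕ, 0 < 1 / ((n : ℝ) + 1) ^ 2 := fun n => by positivity
  have hlO : (fun n : ℕ => 1 / ((n : ℝ) + 1) ^ 2) ∈ littleO := by
    have h1 : Filter.Tendsto (fun n : ℕ => 1 / ((n : ℝ) + 1)) Filter.atTop (nhds 0) :=
      tendsto_one_div_add_atTop_nhds_zero_nat
    refine squeeze_zero_norm (fun n => ?_) h1
    have hn1 : (0:ℝ) < (n : ℝ) + 1 := by positivity
    rw [Real.norm_eq_abs, abs_of_nonneg (by positivity)]
    rw [mul_one_div, div_le_div_iff₀ (by positivity) hn1]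
    nlinarith [Nat.cast_nonneg (α := ℝ) n]
  have htend : Filter.Tendsto (fun n : ℕ => 1 / ((n : ℝ) + 1) ^ 2) Filter.atTop (nhds 0) := by
    have h1 : Filter.Tendsto (fun n : ℕ => 1 / ((n : ℝ) + 1)) Filter.atTop (nhds 0) :=
      tendsto_one_div_add_atTop_nhds_zero_nat
    refine squeeze_zero (fun n => (hpos n).le) (fun n => ?_) h1
    have hn1 : (0:ℝ) < (n : ℝ) + 1 := by positivity
    rw [div_le_div_iff₀ (by positivity) hn1]
    nlinarith [Nat.cast_nonneg (α := ℝ) n]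
  refine ⟨⟨?_, 1, ?_, ?_⟩, ⟨hlO, (Ideal.Quotient.eq_zero_iff_mem).2 hlO⟩, ?_, ?_, ?_⟩
  · intro h
    rw [show (0 : HenleRing) = ((fun _ => 0 : ℕ → ℝ) : HenleRing) from rfl,
      Filter.Germ.coe_eq] at h
    rcases h.exists with ⟨n, hn⟩
    exact (hpos n).ne' hn
  · rw [Nat.cast_one, show (-((1:ℝ)) : HenleRing) = ((fun _ => -1 : ℕ → ℝ) : HenleRing) from rfl,
      Filter.Germ.coe_le]
    exact Filter.Eventually.of_forall fun n => by linarith [hpos n]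
  · rw [Nat.cast_one, show (((1:ℝ)) : HenleRing) = ((fun _ => 1 : ℕ → ℝ) : HenleRing) from rfl,
      Filter.Germ.coe_le]
    refine Filter.Eventually.of_forall fun n => ?_
    have hn1 : (0:ℝ) < ((n : ℝ) + 1)^2 := by positivity
    rw [div_le_one hn1]; nlinarith [Nat.cast_nonneg (α := ℝ) n]
  · refine ne_of_gt ?_
    rw [show (0 : ℝ*) = Hyperreal.ofSeq (fun _ => 0) from rfl, Hyperreal.ofSeq_lt_ofSeq]
    exact Filter.Eventually.of_forall hpos
  · rw [show (0 : ℝ*) = Hyperreal.ofSeq (fun _ => 0) from rfl, Hyperreal.ofSeq_lt_ofSeq]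
    exact Filter.Eventually.of_forall hpos
  · exact Hyperreal.infinitesimal_of_tendsto_zero htend
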